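/- arXiv:1405.1663 — 3 statements merged into one kernel-verified Lean document; each statement's English description precedes it below -/
import Mathlib

section
/- Let c > 1 be a real number and let G be a graph on ⌈cn⌉ vertices whose edges are coloured blue and red such that there is no blue path on n vertices. Then there exist two disjoint vertex sets U, W, each of size at least ⌊n(c-1)/2⌋, such that no blue edge joins a vertex of U to a vertex of W. -/
open SimpleGraph

/-- From a nonempty chain (path-like list) build a walk whose support is the list. -/
lemma chain_walk {V : Type*} (blue : SimpleGraph V) :
    ∀ (l : List V) (a : V), List.Chain' blue.Adj (a :: l) →
      ∃ (b : V) (p : blue.Walk a b), p.support = a :: l := by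
  intro l
  induction l with
  | nil => exact fun a _ => ⟨a, Walk.nil, rfl⟩
  | cons x xs ih =>
    intro a h
    replace h : blue.Adj a x ∧ List.Chain' blue.Adj (x :: xs) := List.isChain_cons_cons.mp h
    obtain ⟨b, p, hp⟩ := ih x h.2
    exact ⟨b, Walk.cons h.1 p, by simp [hp]⟩

/-- If there is no blue path on `n` vertices, no nodup chain has length `n`. -/
lemma no_chain_n {V : Type*} (blue : SimpleGraph V) (n : ℕ)
    (hnopath : ¬ ∃ (u v : V) (p : blue.Walk u v), p.IsPath ∧ p.support.length = n)
    (a : V) (l : List V) (hnd : (a :: l).Nodup) (hch : List.Chain' blue.Adj (a :: l)) :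
    (a :: l).length ≠ n := by
  intro hlen
  obtain ⟨b, p, hp⟩ := chain_walk blue l a hch
  exact hnopath ⟨a, b, p, (Walk.isPath_def p).mpr (hp ▸ hnd), by rw [hp]; exact hlen⟩

lemma cover_bound {V : Type*} [Fintype V] [DecidableEq V] (n : ℕ)
    (S T : Finset V) (stack : List V)
    (hcov : ∀ x : V, x ∈ S ∨ x ∈ T ∨ x ∈ stack)
    (hlen : stack.length < n) :
    Fintype.card V ≤ S.card + T.card + (n - 1) := by
  have h1 : (Finset.univ : Finset V) ⊆ S ∪ T ∪ stack.toFinset := by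
    intro x _
    simp only [Finset.mem_union, List.mem_toFinset]
    rcases hcov x with h | h | h
    · exact Or.inl (Or.inl h)
    · exact Or.inl (Or.inr h)
    · exact Or.inr h
  have h2 := Finset.card_le_card h1
  have h3 := Finset.card_union_le (S ∪ T) stack.toFinset
  have h4 := Finset.card_union_le S T
  have h5 := stack.toFinset_card_le
  simp only [Finset.card_univ] at h2
  omega

/-- The DFS process: maintaining invariants, we can grow the explored set `S`
until it has exactly `k` elements. -/
lemma dfs {V : Type*} [Fintype V] [DecidableEq V] (blue : SimpleGraph V) (n : ℕ)
    (hn : 0 < n)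
    (hnopath : ¬ ∃ (u v : V) (p : blue.Walk u v), p.IsPath ∧ p.support.length = n)
    (k : ℕ) (hk : k ≤ Fintype.card V) :
    ∀ (m : ℕ) (S T : Finset V) (stack : List V),
      2 * T.card + stack.length ≤ m →
      (∀ x : V, x ∈ S ∨ x ∈ T ∨ x ∈ stack) →
      Disjoint S T →
      (∀ x ∈ stack, x ∉ S) →
      (∀ x ∈ stack, x ∉ T) →
      stack.Nodup →
      List.Chain' blue.Adj stack →
      stack.length < n →
      (∀ s ∈ S, ∀ t ∈ T, ¬ blue.Adj s t) →
      S.card ≤ k →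
      ∃ S' T' : Finset V, S'.card = k ∧ Disjoint S' T' ∧
        (∀ s ∈ S', ∀ t ∈ T', ¬ blue.Adj s t) ∧
        Fintype.card V ≤ S'.card + T'.card + (n - 1) := by
  intro m
  induction m with
  | zero =>
    intro S T stack hm hcov hST hsS hsT hnd hch hlen hblue hcard
    have hT : T.card = 0 := by omega
    have hstack : stack = [] := by
      cases stack with
      | nil => rfl
      | cons a l => simp at hm
    have hSuniv : S = Finset.univ := by
      apply Finset.eq_univ_iff_forall.mpr
      intro x
      rcases hcov x with h | h | h
      · exact h
      · exact absurd (Finset.card_eq_zero.mp hT ▸ h) (by simp)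
      · rw [hstack] at h; simp at h
    have : S.card = Fintype.card V := by rw [hSuniv, Finset.card_univ]
    have hSk : S.card = k := by omega
    exact ⟨S, T, hSk, hST, hblue, cover_bound n S T stack hcov hlen⟩
  | succ m ih =>
    intro S T stack hm hcov hST hsS hsT hnd hch hlen hblue hcard
    by_cases hSk : S.card = k
    · exact ⟨S, T, hSk, hST, hblue, cover_bound n S T stack hcov hlen⟩
    have hSlt : S.card < k := lt_of_le_of_ne hcard hSk
    cases stack with
    | nil =>
      -- seed: pick any unexplored vertex
      have hTne : ∃ t, t ∈ T := by
        by_contra hno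
        push_neg at hno
        have : S = Finset.univ := by
          apply Finset.eq_univ_iff_forall.mpr
          intro x
          rcases hcov x with h | h | h
          · exact h
          · exact absurd h (hno x)
          · simp at h
        have : S.card = Fintype.card V := by rw [this, Finset.card_univ]
        omega
      obtain ⟨t, ht⟩ := hTne
      have htS : t ∉ S := Finset.disjoint_right.mp hST ht
      have hTpos : 0 < T.card := Finset.card_pos.mpr ⟨t, ht⟩
      have hne : ([t] : List V).length ≠ n :=
        no_chain_n blue n hnopath t [] (by simp) (List.isChain_singleton t)
      apply ih S (T.erase t) [t]
      · have := Finset.card_erase_of_mem ht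
        simp only [List.length_cons, List.length_nil] at hm ⊢
        omega
      · intro x
        rcases hcov x with h | h | h
        · exact Or.inl h
        · by_cases hxt : x = t
          · exact Or.inr (Or.inr (by simp [hxt]))
          · exact Or.inr (Or.inl (Finset.mem_erase.mpr ⟨hxt, h⟩))
        · simp at h
      · exact hST.mono_right (Finset.erase_subset t T)
      · intro x hx; simp at hx; subst hx; exact htS
      · intro x hx; simp at hx; subst hx; exact Finset.notMem_erase _ T
      · simp
      · exact List.isChain_singleton t
      · simp at hne ⊢; omega
      · intro s hs u hu
        exact hblue s hs u (Finset.mem_of_mem_erase hu)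
      · exact hcard
    | cons v rest =>
      by_cases hadj : ∃ t ∈ T, blue.Adj v t
      · -- push: extend the path
        obtain ⟨t, ht, hvt⟩ := hadj
        have htS : t ∉ S := Finset.disjoint_right.mp hST ht
        have htstack : t ∉ v :: rest := fun h => hsT t h ht
        have hTpos : 0 < T.card := Finset.card_pos.mpr ⟨t, ht⟩
        have hnd' : (t :: v :: rest).Nodup := List.nodup_cons.mpr ⟨htstack, hnd⟩
        have hch' : List.Chain' blue.Adj (t :: v :: rest) :=
          List.isChain_cons_cons.mpr ⟨hvt.symm, hch⟩
        have hne : (t :: v :: rest).length ≠ n :=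
          no_chain_n blue n hnopath t (v :: rest) hnd' hch'
        apply ih S (T.erase t) (t :: v :: rest)
        · have := Finset.card_erase_of_mem ht
          simp only [List.length_cons] at hm ⊢
          omega
        · intro x
          rcases hcov x with h | h | h
          · exact Or.inl h
          · by_cases hxt : x = t
            · exact Or.inr (Or.inr (by simp [hxt]))
            · exact Or.inr (Or.inl (Finset.mem_erase.mpr ⟨hxt, h⟩))
          · exact Or.inr (Or.inr (List.mem_cons_of_mem t h))
        · exact hST.mono_right (Finset.erase_subset t T)
        · intro x hx
          rcases List.mem_cons.mp hx with h | h
          · subst h; exact htS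
          · exact hsS x h
        · intro x hx
          rcases List.mem_cons.mp hx with h | h
          · subst h; exact Finset.notMem_erase _ T
          · exact fun hmem => hsT x h (Finset.mem_of_mem_erase hmem)
        · exact hnd'
        · exact hch'
        · simp only [List.length_cons] at hne hlen ⊢; omega
        · intro s hs u hu
          exact hblue s hs u (Finset.mem_of_mem_erase hu)
        · exact hcard
      · -- pop: move v into the explored set
        push_neg at hadj
        have hvS : v ∉ S := hsS v (by simp)
        have hvT : v ∉ T := hsT v (by simp)
        have hrest : rest.Nodup := hnd.of_cons
        have hvrest : v ∉ rest := (List.nodup_cons.mp hnd).1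
        apply ih (insert v S) T rest
        · simp only [List.length_cons] at hm; omega
        · intro x
          rcases hcov x with h | h | h
          · exact Or.inl (Finset.mem_insert_of_mem h)
          · exact Or.inr (Or.inl h)
          · rcases List.mem_cons.mp h with h | h
            · exact Or.inl (h ▸ Finset.mem_insert_self v S)
            · exact Or.inr (Or.inr h)
        · exact Finset.disjoint_left.mpr (fun x hx hxT => by
            rcases Finset.mem_insert.mp hx with h | h
            · exact hvT (h ▸ hxT)
            · exact Finset.disjoint_left.mp hST h hxT)
        · intro x hx hmem
          rcases Finset.mem_insert.mp hmem with h | h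
          · exact hvrest (h ▸ hx)
          · exact hsS x (List.mem_cons_of_mem v hx) h
        · intro x hx; exact hsT x (List.mem_cons_of_mem v hx)
        · exact hrest
        · exact hch.tail
        · simp only [List.length_cons] at hlen; omega
        · intro s hs u hu
          rcases Finset.mem_insert.mp hs with h | h
          · exact h ▸ hadj u hu
          · exact hblue s h u hu
        · rw [Finset.card_insert_of_notMem hvS]; omega

/-- Lemma 2.1(i): if a 2-coloured graph on ⌈cn⌉ vertices has no blue path on `n`
vertices, there are disjoint sets `U, W` of size at least ⌊n(c-1)/2⌋ with no blue
edge between them. -/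
theorem stmt0 (c : ℝ) (hc : 1 < c) (n : ℕ) (V : Type*) [Fintype V] [DecidableEq V]
    (hV : Fintype.card V = ⌈c * n⌉₊)
    (G blue : SimpleGraph V) (hblue : blue ≤ G)
    (hnopath : ¬ ∃ (u v : V) (p : blue.Walk u v), p.IsPath ∧ p.support.length = n) :
    ∃ U W : Finset V, Disjoint U W ∧
      ⌊(n : ℝ) * (c - 1) / 2⌋₊ ≤ U.card ∧ ⌊(n : ℝ) * (c - 1) / 2⌋₊ ≤ W.card ∧
      ∀ u ∈ U, ∀ w ∈ W, ¬ blue.Adj u w := by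
  rcases Nat.eq_zero_or_pos n with hn | hn
  · subst hn
    refine ⟨∅, ∅, Finset.disjoint_empty_left _, ?_, ?_, by simp⟩ <;> simp
  set k := ⌊(n : ℝ) * (c - 1) / 2⌋₊ with hkdef
  have hk2 : 2 * k + n ≤ Fintype.card V := by
    have hpos : (0:ℝ) ≤ (n : ℝ) * (c - 1) / 2 := by
      apply div_nonneg _ (by norm_num)
      exact mul_nonneg (Nat.cast_nonneg n) (by linarith)
    have h1 : (k : ℝ) ≤ (n : ℝ) * (c - 1) / 2 := Nat.floor_le hpos
    have h2 : (c * n : ℝ) ≤ (⌈c * n⌉₊ : ℝ) := Nat.le_ceil _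
    have h3 : (2 * k + n : ℝ) ≤ (⌈c * n⌉₊ : ℝ) := by nlinarith
    rw [hV]
    exact_mod_cast h3
  have hkV : k ≤ Fintype.card V := by omega
  obtain ⟨S, T, hScard, hdisj, hnb, hbd⟩ :=
    dfs blue n hn hnopath k hkV (2 * Fintype.card V) ∅ Finset.univ []
      (by simp [Finset.card_univ]) (fun x => Or.inr (Or.inl (Finset.mem_univ x)))
      (Finset.disjoint_empty_left _) (by simp) (by simp) (by simp) List.isChain_nil
      (by simpa using hn) (by simp) (by simp)
  refine ⟨S, T, hdisj, le_of_eq hScard.symm, ?_, ?_⟩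
  · omega
  · intro u hu w hw; exact hnb u hu w hw
end

section
/- Let G be a graph on cn vertices (c > 3) with the property that for every two disjoint vertex sets S, T of size n(c−3)/4 there is at least one edge between S and T. Then G → P_n, i.e., every 2-colouring of the edges of G with blue and red yields a monochromatic path on n vertices. -/
private lemma walk_of_chain {V : Type*} (H : SimpleGraph V) :
    ∀ (l : List V) (a : V), List.Chain H.Adj a l →
      ∃ (b : V) (p : H.Walk a b), p.support = a :: l := by
  intro l
  induction l with
  | nil => exact fun a _ => ⟨a, .nil, rfl⟩
  | cons c l ih =>
      intro a h
      replace h := List.isChain_cons_cons.mp h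
      obtain ⟨b, p, hp⟩ := ih c h.2
      exact ⟨b, .cons h.1 p, by simp [hp]⟩

private lemma dfs_aux {V : Type*} [DecidableEq V] (H : SimpleGraph V) (n : ℕ) (hn : 0 < n)
    (W : Finset V) :
    ∀ (N : ℕ) (S T : Finset V) (stack : List V),
      2 * T.card + stack.length ≤ N →
      S ⊆ W → T ⊆ W → (∀ x ∈ stack, x ∈ W) →
      Disjoint S T → (∀ x ∈ stack, x ∉ S) → (∀ x ∈ stack, x ∉ T) →
      stack.Nodup → stack.Chain' H.Adj →
      stack.length < n →
      W.card = S.card + T.card + stack.length →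
      (∀ s ∈ S, ∀ t ∈ T, ¬ H.Adj s t) →
      S.card ≤ T.card →
      (∃ u v, ∃ p : H.Walk u v, p.IsPath ∧ p.support.length = n) ∨
      ∃ S' T' : Finset V, S' ⊆ W ∧ T' ⊆ W ∧ Disjoint S' T' ∧ S'.card = T'.card ∧
        W.card + 1 ≤ 2 * S'.card + n ∧ ∀ s ∈ S', ∀ t ∈ T', ¬ H.Adj s t := by
  classical
  intro N
  induction N with
  | zero =>
      intro S T stack hmeas hSW hTW _ hST _ _ _ _ hlen hcard hedge hle
      have hT : T.card = 0 := by omega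
      have hS : S.card = 0 := by omega
      exact Or.inr ⟨S, T, hSW, hTW, hST, by omega, by omega, hedge⟩
  | succ N ih =>
      intro S T stack hmeas hSW hTW hstW hST hstS hstT hnd hch hlen hcard hedge hle
      by_cases heq : S.card = T.card
      · exact Or.inr ⟨S, T, hSW, hTW, hST, heq, by omega, hedge⟩
      have hlt : S.card < T.card := lt_of_le_of_ne hle heq
      have hTne : T.Nonempty := Finset.card_pos.mp (by omega)
      match stack, hstW, hstS, hstT, hnd, hch, hlen, hcard with
      | [], _, _, _, _, _, _, hcard =>
          simp only [List.length_nil] at hmeas hcard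
          obtain ⟨t, ht⟩ := hTne
          by_cases hn1 : n = 1
          · exact Or.inl ⟨t, t, .nil, SimpleGraph.Walk.IsPath.nil, by simp [hn1]⟩
          · have htS : t ∉ S := Finset.disjoint_right.mp hST ht
            refine ih S (T.erase t) [t] ?_ hSW (fun x hx => hTW (Finset.mem_of_mem_erase hx))
              ?_ (Finset.disjoint_of_subset_right (Finset.erase_subset _ _) hST)
              ?_ ?_ (by simp) (List.isChain_singleton t) (by simp only [List.length_singleton]; omega) ?_
              (fun s hs u hu => hedge s hs u (Finset.mem_of_mem_erase hu)) ?_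
            · rw [Finset.card_erase_of_mem ht]
              simp only [List.length_cons, List.length_nil]; omega
            · intro x hx; simp only [List.mem_singleton] at hx; exact hx ▸ hTW ht
            · intro x hx; simp only [List.mem_singleton] at hx; exact hx ▸ htS
            · intro x hx; simp only [List.mem_singleton] at hx
              exact hx ▸ Finset.notMem_erase t T
            · rw [Finset.card_erase_of_mem ht]
              simp only [List.length_cons, List.length_nil]; omega
            · rw [Finset.card_erase_of_mem ht]; omega
      | u :: rest, hstW, hstS, hstT, hnd, hch, hlen, hcard =>
          by_cases hadj : ∃ t ∈ T, H.Adj t u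
          · obtain ⟨t, ht, hta⟩ := hadj
            have htst : t ∉ u :: rest := fun h => hstT t h ht
            have htS : t ∉ S := Finset.disjoint_right.mp hST ht
            by_cases hlenn : rest.length + 2 = n
            · -- output the path t :: u :: rest
              have hchain : List.Chain H.Adj t (u :: rest) :=
                List.chain_cons.mpr ⟨hta, hch⟩
              obtain ⟨b, p, hp⟩ := walk_of_chain H (u :: rest) t hchain
              refine Or.inl ⟨t, b, p, SimpleGraph.Walk.IsPath.mk' ?_, ?_⟩
              · rw [hp]; exact List.nodup_cons.mpr ⟨htst, hnd⟩
              · rw [hp]; simp only [List.length_cons]; omega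
            · -- push t
              refine ih S (T.erase t) (t :: u :: rest) ?_ hSW
                (fun x hx => hTW (Finset.mem_of_mem_erase hx)) ?_
                (Finset.disjoint_of_subset_right (Finset.erase_subset _ _) hST) ?_ ?_
                (List.nodup_cons.mpr ⟨htst, hnd⟩) (List.isChain_cons_cons.mpr ⟨hta, hch⟩)
                ?_ ?_ (fun s hs v hv => hedge s hs v (Finset.mem_of_mem_erase hv)) ?_
              · rw [Finset.card_erase_of_mem ht]; simp only [List.length_cons] at *; omega
              · intro x hx
                rcases List.mem_cons.mp hx with h | h
                · exact h ▸ hTW ht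
                · exact hstW x h
              · intro x hx
                rcases List.mem_cons.mp hx with h | h
                · exact h ▸ htS
                · exact hstS x h
              · intro x hx
                rcases List.mem_cons.mp hx with h | h
                · exact h ▸ Finset.notMem_erase t T
                · intro hxT; exact hstT x h (Finset.mem_of_mem_erase hxT)
              · simp only [List.length_cons] at *; omega
              · rw [Finset.card_erase_of_mem ht]; simp only [List.length_cons] at *; omega
              · rw [Finset.card_erase_of_mem ht]; omega
          · -- pop u
            push_neg at hadj
            have huS : u ∉ S := hstS u (List.mem_cons_self)
            refine ih (insert u S) T rest ?_ ?_ hTW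
              (fun x hx => hstW x (List.mem_cons_of_mem u hx)) ?_ ?_
              (fun x hx => hstT x (List.mem_cons_of_mem u hx))
              (List.nodup_cons.mp hnd).2 hch.tail ?_ ?_ ?_ ?_
            · simp only [List.length_cons] at hmeas; omega
            · exact Finset.insert_subset (hstW u (List.mem_cons_self)) hSW
            · exact Finset.disjoint_insert_left.mpr
                ⟨hstT u (List.mem_cons_self), hST⟩
            · intro x hx
              rw [Finset.mem_insert]
              push_neg
              exact ⟨fun h => (List.nodup_cons.mp hnd).1 (h ▸ hx), hstS x (List.mem_cons_of_mem u hx)⟩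
            · simp only [List.length_cons] at hlen; omega
            · rw [Finset.card_insert_of_notMem huS]; simp only [List.length_cons] at hcard; omega
            · intro s hs v hv
              rcases Finset.mem_insert.mp hs with h | h
              · exact h ▸ fun ha => hadj v hv ha.symm
              · exact hedge s h v hv
            · rw [Finset.card_insert_of_notMem huS]; omega

private lemma dfs_lemma {V : Type*} [DecidableEq V] (H : SimpleGraph V) (n : ℕ) (hn : 0 < n)
    (W : Finset V) :
    (∃ u v, ∃ p : H.Walk u v, p.IsPath ∧ p.support.length = n) ∨
    ∃ S' T' : Finset V, S' ⊆ W ∧ T' ⊆ W ∧ Disjoint S' T' ∧ S'.card = T'.card ∧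
      W.card + 1 ≤ 2 * S'.card + n ∧ ∀ s ∈ S', ∀ t ∈ T', ¬ H.Adj s t := by
  refine dfs_aux H n hn W (2 * W.card) ∅ W [] (by simp) (by simp) (by simp)
    (by simp) (by simp) (by simp) (by simp) (by simp) List.isChain_nil hn (by simp) (by simp) (by simp)

/-- Deterministic core of Theorem 1.1: a graph on `cn` vertices (`c > 3`) in
which every two disjoint sets of `n(c-3)/4` vertices are joined by an edge
arrows `P_n`. -/
theorem stmt12 (c : ℝ) (hc : 3 < c) (n : ℕ) (hn : 0 < n)
    {V : Type*} [Fintype V] [DecidableEq V]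
    (hV : (Fintype.card V : ℝ) = c * n)
    (m k : ℕ) (hm : (m : ℝ) = n * (c - 3) / 4) (hk : (k : ℝ) = n * (c - 1) / 2)
    (hm0 : 0 < m) (hk0 : 0 < k)
    (G : SimpleGraph V)
    (hexp : ∀ S T : Finset V, Disjoint S T → S.card = m → T.card = m →
      ∃ s ∈ S, ∃ t ∈ T, G.Adj s t) :
    ∀ blue ≤ G,
      (∃ (u v : V) (p : blue.Walk u v), p.IsPath ∧ p.support.length = n) ∨
      (∃ (u v : V) (p : (G \ blue).Walk u v), p.IsPath ∧ p.support.length = n) := by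
  intro blue hblue
  classical
  set N := Fintype.card V with hN
  -- key numeric fact : N = 4m + 3n
  have hNm : N = 4 * m + 3 * n := by
    have : ((4 * m + 3 * n : ℕ) : ℝ) = N := by
      push_cast [hm, hV]; ring
    exact_mod_cast this.symm
  -- first DFS: on blue, whole vertex set
  rcases dfs_lemma blue n hn Finset.univ with hpath | ⟨S, T, _, _, hST, hcards, hbound, hnoblue⟩
  · exact Or.inl hpath
  rw [Finset.card_univ, ← hN] at hbound
  -- red bipartite graph between S and T
  set R : SimpleGraph V :=
    { Adj := fun x y => G.Adj x y ∧ ((x ∈ S ∧ y ∈ T) ∨ (x ∈ T ∧ y ∈ S))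
      symm := by
        constructor
        intro x y ⟨h1, h2⟩
        exact ⟨h1.symm, h2.elim (fun h => Or.inr ⟨h.2, h.1⟩) (fun h => Or.inl ⟨h.2, h.1⟩)⟩
      loopless := ⟨fun x ⟨h, _⟩ => G.irrefl h⟩ } with hR
  have hRle : R ≤ G \ blue := by
    intro x y ⟨h1, h2⟩
    rw [SimpleGraph.sdiff_adj]
    refine ⟨h1, ?_⟩
    rcases h2 with ⟨hx, hy⟩ | ⟨hx, hy⟩
    · exact hnoblue x hx y hy
    · exact fun hb => hnoblue y hy x hx hb.symm
  -- second DFS: on R, within S ∪ T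
  rcases dfs_lemma R n hn (S ∪ T) with hpath | ⟨S₁, T₁, hS₁W, hT₁W, hST₁, hcards₁, hbound₁, hnored⟩
  · obtain ⟨u, v, p, hp, hlen⟩ := hpath
    exact Or.inr ⟨u, v, p.mapLe hRle, hp.mapLe hRle, by
      rwa [SimpleGraph.Walk.support_map, List.length_map] at *⟩
  exfalso
  rw [Finset.card_union_of_disjoint hST] at hbound₁
  -- counting
  set a := (S₁ ∩ S).card
  set b := (S₁ ∩ T).card
  set c' := (T₁ ∩ S).card
  set d := (T₁ ∩ T).card
  have hab : a + b = S₁.card := by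
    rw [← Finset.card_union_of_disjoint
      (Finset.disjoint_of_subset_left Finset.inter_subset_right
        (Finset.disjoint_of_subset_right Finset.inter_subset_right hST))]
    congr 1
    rw [← Finset.inter_union_distrib_left]
    exact Finset.inter_eq_left.mpr hS₁W
  have hcd : c' + d = T₁.card := by
    rw [← Finset.card_union_of_disjoint
      (Finset.disjoint_of_subset_left Finset.inter_subset_right
        (Finset.disjoint_of_subset_right Finset.inter_subset_right hST))]
    congr 1
    rw [← Finset.inter_union_distrib_left]
    exact Finset.inter_eq_left.mpr hT₁W
  have hacS : a + c' ≤ S.card := by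
    rw [← Finset.card_union_of_disjoint
      (Finset.disjoint_of_subset_left Finset.inter_subset_left
        (Finset.disjoint_of_subset_right Finset.inter_subset_left hST₁))]
    exact Finset.card_le_card (Finset.union_subset Finset.inter_subset_right
      Finset.inter_subset_right)
  have hbdT : b + d ≤ T.card := by
    rw [← Finset.card_union_of_disjoint
      (Finset.disjoint_of_subset_left Finset.inter_subset_left
        (Finset.disjoint_of_subset_right Finset.inter_subset_left hST₁))]
    exact Finset.card_le_card (Finset.union_subset Finset.inter_subset_right
      Finset.inter_subset_right)
  -- derive the contradiction: some cross pair of size ≥ m exists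
  have hgood : (m ≤ a ∧ m ≤ d) ∨ (m ≤ c' ∧ m ≤ b) := by omega
  -- from a good pair, get a red edge inside the "no edge" pair: contradiction
  rcases hgood with ⟨h1, h2⟩ | ⟨h1, h2⟩
  · obtain ⟨X, hXsub, hXcard⟩ := Finset.exists_subset_card_eq h1
    obtain ⟨Y, hYsub, hYcard⟩ := Finset.exists_subset_card_eq h2
    have hdisj : Disjoint X Y :=
      Finset.disjoint_of_subset_left (hXsub.trans Finset.inter_subset_right)
        (Finset.disjoint_of_subset_right (hYsub.trans Finset.inter_subset_right) hST)
    obtain ⟨x, hx, y, hy, hxy⟩ := hexp X Y hdisj hXcard hYcard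
    exact hnored x (Finset.inter_subset_left (hXsub hx)) y
      (Finset.inter_subset_left (hYsub hy))
      ⟨hxy, Or.inl ⟨Finset.inter_subset_right (hXsub hx), Finset.inter_subset_right (hYsub hy)⟩⟩
  · obtain ⟨X, hXsub, hXcard⟩ := Finset.exists_subset_card_eq h1
    obtain ⟨Y, hYsub, hYcard⟩ := Finset.exists_subset_card_eq h2
    have hdisj : Disjoint X Y :=
      Finset.disjoint_of_subset_left (hXsub.trans Finset.inter_subset_right)
        (Finset.disjoint_of_subset_right (hYsub.trans Finset.inter_subset_right) hST)
    obtain ⟨x, hx, y, hy, hxy⟩ := hexp X Y hdisj hXcard hYcard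
    exact hnored y (Finset.inter_subset_left (hYsub hy)) x
      (Finset.inter_subset_left (hXsub hx))
      ⟨hxy.symm, Or.inr ⟨Finset.inter_subset_right (hYsub hy), Finset.inter_subset_right (hXsub hx)⟩⟩
end

section
/- For all sufficiently large n, the size-Ramsey number of the path on n vertices satisfies r̂(P_n) < 137n. -/
open Finset SimpleGraph

variable {V : Type*} [Fintype V] [DecidableEq V]

/-- DFS recursion lemma. -/
lemma dfs_rec (F : SimpleGraph V) [DecidableRel F.Adj] (n d₀ : ℕ) :
    ∀ (μ : ℕ) (D U : Finset V) (a b : V) (w : F.Walk a b),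
    2 * U.card + w.support.length ≤ μ →
    w.IsPath →
    Disjoint D U → Disjoint D w.support.toFinset → Disjoint U w.support.toFinset →
    (∀ d ∈ D, ∀ u ∈ U, ¬ F.Adj d u) →
    D.card ≤ d₀ → d₀ ≤ D.card + U.card + w.support.length →
    w.support.length ≤ n →
    (∃ (x y : V) (p : F.Walk x y), p.IsPath ∧ p.support.length = n) ∨
    (∃ D' U' : Finset V, Disjoint D' U' ∧ (∀ d ∈ D', ∀ u ∈ U', ¬ F.Adj d u) ∧
      D'.card = d₀ ∧ U' ⊆ U ∧ D' ⊆ D ∪ U ∪ w.support.toFinset ∧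
      D.card + U.card + w.support.length ≤ U'.card + d₀ + (n - 1)) := by
  intro μ
  induction μ with
  | zero =>
    intro D U a b w hμ
    have := w.length_support
    omega
  | succ μ ih =>
    intro D U a b w hμ hp hDU hDs hUs hne hDle hdle hlen
    have hls := w.length_support
    by_cases hle : w.support.length = n
    · exact Or.inl ⟨a, b, w, hp, hle⟩
    by_cases hD : D.card = d₀
    · exact Or.inr ⟨D, U, hDU, hne, hD, subset_rfl, by intro x hx; simp [hx],
        by omega⟩
    -- D.card < d₀
    by_cases hadj : ∃ x ∈ U, F.Adj x a
    · -- push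
      obtain ⟨x, hxU, hxa⟩ := hadj
      have hxs : x ∉ w.support := by
        intro h
        exact (Finset.disjoint_left.mp hUs) hxU (List.mem_toFinset.mpr h)
      have hp' : (SimpleGraph.Walk.cons hxa w).IsPath :=
        (SimpleGraph.Walk.cons_isPath_iff hxa w).mpr ⟨hp, hxs⟩
      have hcard : (U.erase x).card = U.card - 1 := Finset.card_erase_of_mem hxU
      have hUc : 1 ≤ U.card := Finset.card_pos.mpr ⟨x, hxU⟩
      have hlc : (SimpleGraph.Walk.cons hxa w).support.length = w.support.length + 1 := by
        simp [SimpleGraph.Walk.support_cons]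
      have hres := ih D (U.erase x) x b (SimpleGraph.Walk.cons hxa w)
        (by rw [hlc, hcard]; omega) hp'
        (hDU.mono_right (Finset.erase_subset _ _))
        (by
          simp only [SimpleGraph.Walk.support_cons, List.toFinset_cons]
          refine Finset.disjoint_insert_right.mpr ⟨?_, hDs⟩
          exact fun h => (Finset.disjoint_left.mp hDU) h hxU)
        (by
          simp only [SimpleGraph.Walk.support_cons, List.toFinset_cons]
          refine Finset.disjoint_insert_right.mpr ⟨Finset.notMem_erase _ _, ?_⟩
          exact hUs.mono_left (Finset.erase_subset _ _))
        (fun d hd u hu => hne d hd u (Finset.mem_of_mem_erase hu))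
        hDle
        (by rw [hlc, hcard]; omega)
        (by rw [hlc]; omega)
      rcases hres with h | ⟨D', U', h1, h2, h3, h4, h5, h6⟩
      · exact Or.inl h
      · refine Or.inr ⟨D', U', h1, h2, h3, h4.trans (Finset.erase_subset _ _), ?_, ?_⟩
        · refine h5.trans ?_
          intro y hy
          simp only [Finset.mem_union, SimpleGraph.Walk.support_cons, List.toFinset_cons,
            Finset.mem_insert] at hy ⊢
          rcases hy with (h | h) | (h | h)
          · exact Or.inl (Or.inl h)
          · exact Or.inl (Or.inr (Finset.mem_of_mem_erase h))
          · exact Or.inl (Or.inr (h ▸ hxU))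
          · exact Or.inr h
        · rw [hlc] at h6
          rw [hcard] at h6
          omega
    · -- pop
      push_neg at hadj
      cases w with
      | nil =>
        -- stack is single vertex a
        have haD : a ∉ D := by
          intro h
          exact (Finset.disjoint_left.mp hDs) h (by simp)
        have haU : a ∉ U := by
          intro h
          exact (Finset.disjoint_left.mp hUs) h (by simp)
        have hcard' : (insert a D).card = D.card + 1 := Finset.card_insert_of_notMem haD
        have hne' : ∀ d ∈ insert a D, ∀ u ∈ U, ¬ F.Adj d u := by
          intro d hd u hu
          rcases Finset.mem_insert.mp hd with rfl | hd
          · exact fun h => hadj u hu h.symm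
          · exact hne d hd u hu
        rcases Finset.eq_empty_or_nonempty U with rfl | ⟨y, hyU⟩
        · -- terminate
          simp only [SimpleGraph.Walk.support_nil, List.length_singleton] at hdle hlen ⊢
          have : (insert a D).card = d₀ := by
            simp only [Finset.card_empty] at hdle
            omega
          refine Or.inr ⟨insert a D, ∅, Finset.disjoint_empty_right _, by simp, this,
            subset_rfl, ?_, ?_⟩
          · intro x hx
            rcases Finset.mem_insert.mp hx with rfl | hx
            · simp
            · simp [hx]
          · simp; omega
        · -- reinit with root y
          have hyD : y ∉ insert a D := by
            simp only [Finset.mem_insert]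
            rintro (rfl | h)
            · exact haU hyU
            · exact (Finset.disjoint_left.mp hDU) h hyU
          have hres := ih (insert a D) (U.erase y) y y SimpleGraph.Walk.nil
            (by
              simp only [SimpleGraph.Walk.support_nil, List.length_singleton,
                Finset.card_erase_of_mem hyU]
              have := Finset.card_pos.mpr ⟨y, hyU⟩
              simp only [SimpleGraph.Walk.support_nil, List.length_singleton] at hμ
              omega)
            SimpleGraph.Walk.IsPath.nil
            (by
              refine Finset.disjoint_insert_left.mpr ⟨?_, hDU.mono_right (Finset.erase_subset _ _)⟩
              exact fun h => haU (Finset.mem_of_mem_erase h))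
            (by
              have hsup : (SimpleGraph.Walk.nil : F.Walk y y).support.toFinset = {y} := by
                simp
              rw [hsup]
              simpa using hyD)
            (by
              have hsup : (SimpleGraph.Walk.nil : F.Walk y y).support.toFinset = {y} := by
                simp
              rw [hsup]
              simpa using Finset.notMem_erase y U)
            (fun d hd u hu => hne' d hd u (Finset.mem_of_mem_erase hu))
            (by omega)
            (by
              simp only [SimpleGraph.Walk.support_nil, List.length_singleton,
                Finset.card_erase_of_mem hyU] at *
              have := Finset.card_pos.mpr ⟨y, hyU⟩
              omega)
            (by
              simp only [SimpleGraph.Walk.support_nil, List.length_singleton] at hlen ⊢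
              omega)
          rcases hres with h | ⟨D', U', h1, h2, h3, h4, h5, h6⟩
          · exact Or.inl h
          · refine Or.inr ⟨D', U', h1, h2, h3, h4.trans (Finset.erase_subset _ _), ?_, ?_⟩
            · refine h5.trans ?_
              intro z hz
              simp only [Finset.mem_union, Finset.mem_insert, List.mem_toFinset,
                SimpleGraph.Walk.support_nil, List.mem_singleton] at hz ⊢
              rcases hz with ((rfl | h) | h) | rfl
              · exact Or.inr rfl
              · exact Or.inl (Or.inl h)
              · exact Or.inl (Or.inr (Finset.mem_of_mem_erase h))
              · exact Or.inl (Or.inr hyU)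
            · simp only [SimpleGraph.Walk.support_nil, List.length_singleton,
                Finset.card_erase_of_mem hyU] at *
              have := Finset.card_pos.mpr ⟨y, hyU⟩
              omega
      | cons h p =>
        rename_i c
        -- pop a into D, continue with p
        obtain ⟨hp2, hansup⟩ := (SimpleGraph.Walk.cons_isPath_iff h p).mp hp
        have haD : a ∉ D := by
          intro hh
          exact (Finset.disjoint_left.mp hDs) hh (by simp [SimpleGraph.Walk.support_cons])
        have haU : a ∉ U := by
          intro hh
          exact (Finset.disjoint_left.mp hUs) hh (by simp [SimpleGraph.Walk.support_cons])
        have hcard' : (insert a D).card = D.card + 1 := Finset.card_insert_of_notMem haD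
        have hslen : (SimpleGraph.Walk.cons h p).support.length = p.support.length + 1 := by
          simp [SimpleGraph.Walk.support_cons]
        have hres := ih (insert a D) U c b p
          (by omega) hp2
          (Finset.disjoint_insert_left.mpr ⟨haU, hDU⟩)
          (by
            refine Finset.disjoint_insert_left.mpr ⟨?_, ?_⟩
            · exact fun hh => hansup (List.mem_toFinset.mp hh)
            · refine hDs.mono_right ?_
              intro z hz
              simp only [List.mem_toFinset] at hz ⊢
              simp [SimpleGraph.Walk.support_cons, hz])
          (by
            refine hUs.mono_right ?_
            intro z hz
            simp only [List.mem_toFinset] at hz ⊢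
            simp [SimpleGraph.Walk.support_cons, hz])
          (by
            intro d hd u hu
            rcases Finset.mem_insert.mp hd with rfl | hd
            · exact fun hh => hadj u hu hh.symm
            · exact hne d hd u hu)
          (by omega) (by omega) (by omega)
        rcases hres with hh | ⟨D', U', h1, h2, h3, h4, h5, h6⟩
        · exact Or.inl hh
        · refine Or.inr ⟨D', U', h1, h2, h3, h4, ?_, by omega⟩
          refine h5.trans ?_
          intro z hz
          simp only [Finset.mem_union, Finset.mem_insert, List.mem_toFinset,
            SimpleGraph.Walk.support_cons, List.mem_cons] at hz ⊢
          tauto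

/-- DFS wrapper. -/
lemma dfs_s15 (F : SimpleGraph V) [DecidableRel F.Adj] (S : Finset V) (n d₀ : ℕ)
    (hn : 1 ≤ n) (hd : d₀ ≤ S.card) :
    (∃ (x y : V) (p : F.Walk x y), p.IsPath ∧ p.support.length = n) ∨
    (∃ D U : Finset V, Disjoint D U ∧ (∀ d ∈ D, ∀ u ∈ U, ¬ F.Adj d u) ∧
      D.card = d₀ ∧ U ⊆ S ∧ D ⊆ S ∧ S.card ≤ U.card + d₀ + (n - 1)) := by
  rcases Finset.eq_empty_or_nonempty S with rfl | ⟨r, hr⟩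
  · refine Or.inr ⟨∅, ∅, by simp, by simp, by simp at hd ⊢; omega, by simp, by simp, by simp⟩
  · have hres := dfs_rec F n d₀ (2 * S.card + 1) ∅ (S.erase r) r r SimpleGraph.Walk.nil
      (by
        simp only [SimpleGraph.Walk.support_nil, List.length_singleton,
          Finset.card_erase_of_mem hr]
        have := Finset.card_pos.mpr ⟨r, hr⟩
        omega)
      SimpleGraph.Walk.IsPath.nil (by simp)
      (by simp)
      (by
        have hsup : (SimpleGraph.Walk.nil : F.Walk r r).support.toFinset = {r} := by
          simp
        rw [hsup]
        simpa using Finset.notMem_erase r S)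
      (by simp) (by simp)
      (by
        simp only [Finset.card_empty, SimpleGraph.Walk.support_nil, List.length_singleton,
          Finset.card_erase_of_mem hr]
        have := Finset.card_pos.mpr ⟨r, hr⟩
        omega)
      (by simpa using hn)
    rcases hres with h | ⟨D', U', h1, h2, h3, h4, h5, h6⟩
    · exact Or.inl h
    · refine Or.inr ⟨D', U', h1, h2, h3, h4.trans (Finset.erase_subset _ _), ?_, ?_⟩
      · refine h5.trans ?_
        intro z hz
        simp only [Finset.mem_union, Finset.notMem_empty, List.mem_toFinset,
          SimpleGraph.Walk.support_nil, List.mem_singleton, false_or] at hz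
        rcases hz with h | rfl
        · exact Finset.mem_of_mem_erase h
        · exact hr
      · simp only [Finset.card_empty, SimpleGraph.Walk.support_nil, List.length_singleton,
          Finset.card_erase_of_mem hr] at h6
        have := Finset.card_pos.mpr ⟨r, hr⟩
        omega

/-- The colouring lemma: an `n`-joined graph on `7n` vertices arrows `P_n`. -/
lemma arrows (n : ℕ) (hn : 1 ≤ n) (G : SimpleGraph (Fin (7 * n)))
    (hQ : ∀ A B : Finset (Fin (7 * n)), Disjoint A B → n ≤ A.card → n ≤ B.card →
      ∃ a ∈ A, ∃ b ∈ B, G.Adj a b) :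
    ∀ blue ≤ G,
      (∃ (u v : Fin (7 * n)) (p : blue.Walk u v), p.IsPath ∧ p.support.length = n) ∨
      (∃ (u v : Fin (7 * n)) (p : (G \ blue).Walk u v), p.IsPath ∧ p.support.length = n) := by
  classical
  intro blue hblue
  by_contra hcon
  push_neg at hcon
  obtain ⟨hnoblue, hnored⟩ := hcon
  -- Stage 1: DFS on blue over the whole vertex set
  have hcardV : (Finset.univ : Finset (Fin (7 * n))).card = 7 * n := by simp
  have hstage1 := dfs_s15 blue (Finset.univ) n (3 * n) hn (by omega)
  rcases hstage1 with ⟨x, y, p, hp, hlen⟩ | ⟨D, U, hDU, hDUne, hDcard, hUS, hDS, hsize⟩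
  · exact (hnoblue x y p hp hlen).elim
  rw [hcardV] at hsize
  have hUcard : 3 * n + 1 ≤ U.card := by omega
  -- Stage 2 graph: red edges between D and U
  set F2 : SimpleGraph (Fin (7 * n)) :=
    { Adj := fun x y => ((x ∈ D ∧ y ∈ U) ∨ (x ∈ U ∧ y ∈ D)) ∧ G.Adj x y ∧ ¬ blue.Adj x y
      symm := by
        constructor
        intro x y h
        refine ⟨?_, h.2.1.symm, fun hb => h.2.2 hb.symm⟩
        tauto
      loopless := ⟨fun x h => G.loopless.irrefl x h.2.1⟩ } with hF2
  have hF2le : F2 ≤ G \ blue := by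
    intro x y h
    exact (SimpleGraph.sdiff_adj G blue x y).mpr ⟨h.2.1, h.2.2⟩
  have hS2card : (D ∪ U).card = D.card + U.card := Finset.card_union_of_disjoint hDU
  have hstage2 := dfs_s15 F2 (D ∪ U) n (2 * n) hn (by omega)
  rcases hstage2 with ⟨x, y, p, hp, hlen⟩ | ⟨Z, W, hZW, hZWne, hZcard, hWS, hZS, hsize2⟩
  · exact (hnored x y (p.mapLe hF2le) (hp.mapLe hF2le) (by
      rw [SimpleGraph.Walk.mapLe]
      simpa using hlen)).elim
  rw [hS2card, hDcard] at hsize2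
  have hWcard : U.card + 1 ≤ W.card := by omega
  -- split cards
  have hz : (Z ∩ D).card + (Z ∩ U).card = 2 * n := by
    rw [← Finset.card_union_of_disjoint
      (Finset.disjoint_of_subset_left (Finset.inter_subset_right)
        (Finset.disjoint_of_subset_right (Finset.inter_subset_right) hDU))]
    rw [← Finset.inter_union_distrib_left]
    rw [(Finset.inter_eq_left.mpr hZS), hZcard]
  have hw : (W ∩ D).card + (W ∩ U).card = W.card := by
    rw [← Finset.card_union_of_disjoint
      (Finset.disjoint_of_subset_left (Finset.inter_subset_right)
        (Finset.disjoint_of_subset_right (Finset.inter_subset_right) hDU))]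
    rw [← Finset.inter_union_distrib_left]
    rw [(Finset.inter_eq_left.mpr hWS)]
  -- key claims from hQ
  have key : ∀ A B : Finset (Fin (7 * n)), A ⊆ Z → B ⊆ W →
      ((A ⊆ D ∧ B ⊆ U) ∨ (A ⊆ U ∧ B ⊆ D)) → n ≤ A.card → n ≤ B.card → False := by
    intro A B hAZ hBW hside hA hB
    have hABdisj : Disjoint A B := Finset.disjoint_of_subset_left hAZ
      (Finset.disjoint_of_subset_right hBW hZW)
    obtain ⟨a, ha, b, hb, hab⟩ := hQ A B hABdisj hA hB
    have hnb : ¬ blue.Adj a b := by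
      rcases hside with ⟨hAD, hBU⟩ | ⟨hAU, hBD⟩
      · exact hDUne a (hAD ha) b (hBU hb)
      · exact fun h => hDUne b (hBD hb) a (hAU ha) h.symm
    have hF2adj : F2.Adj a b := by
      refine ⟨?_, hab, hnb⟩
      rcases hside with ⟨hAD, hBU⟩ | ⟨hAU, hBD⟩
      · exact Or.inl ⟨hAD ha, hBU hb⟩
      · exact Or.inr ⟨hAU ha, hBD hb⟩
    exact hZWne a (hAZ ha) b (hBW hb) hF2adj
  have P1 : ¬ (n ≤ (Z ∩ D).card ∧ n ≤ (W ∩ U).card) := by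
    rintro ⟨h1, h2⟩
    exact key (Z ∩ D) (W ∩ U) (Finset.inter_subset_left) (Finset.inter_subset_left)
      (Or.inl ⟨Finset.inter_subset_right, Finset.inter_subset_right⟩) h1 h2
  have P2 : ¬ (n ≤ (Z ∩ U).card ∧ n ≤ (W ∩ D).card) := by
    rintro ⟨h1, h2⟩
    exact key (Z ∩ U) (W ∩ D) (Finset.inter_subset_left) (Finset.inter_subset_left)
      (Or.inr ⟨Finset.inter_subset_right, Finset.inter_subset_right⟩) h1 h2
  -- capacity constraints
  have hcap1 : (Z ∩ U).card + (W ∩ U).card ≤ U.card := by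
    rw [← Finset.card_union_of_disjoint (Finset.disjoint_of_subset_left
      (Finset.inter_subset_left) (Finset.disjoint_of_subset_right
        (Finset.inter_subset_left) hZW))]
    exact Finset.card_le_card (Finset.union_subset (Finset.inter_subset_right)
      (Finset.inter_subset_right))
  have hcap2 : (Z ∩ D).card + (W ∩ D).card ≤ 3 * n := by
    rw [← hDcard]
    rw [← Finset.card_union_of_disjoint (Finset.disjoint_of_subset_left
      (Finset.inter_subset_left) (Finset.disjoint_of_subset_right
        (Finset.inter_subset_left) hZW))]
    exact Finset.card_le_card (Finset.union_subset (Finset.inter_subset_right)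
      (Finset.inter_subset_right))
  push_neg at P1 P2
  rcases Nat.lt_or_ge (Z ∩ D).card n with h | h
  · -- z1 ≤ n-1 : z2 ≥ n+1, so w1 ≤ n-1, so w2 large; z2+w2 ≤ u contradiction
    have hz2 : n ≤ (Z ∩ U).card := by omega
    have hw1 : (W ∩ D).card < n := P2 hz2
    omega
  · have hw2 : (W ∩ U).card < n := P1 h
    have hw1 : n ≤ (W ∩ D).card := by omega
    have hz2 : (Z ∩ U).card < n := by
      by_contra hc
      push_neg at hc
      exact absurd hw1 (Nat.not_le_of_lt (P2 hc))
    omega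


/-- `C(x,M) * (x - M) = x * C(x-1,M)`. -/
lemma choose_iden (x M : ℕ) (hx : 1 ≤ x) :
    x.choose M * (x - M) = x * (x - 1).choose M := by
  rcases Nat.lt_or_ge (x - 1) M with h | h
  · -- M ≥ x : both sides zero
    rcases Nat.lt_or_ge x M with h2 | h2
    · rw [Nat.choose_eq_zero_of_lt h2, Nat.choose_eq_zero_of_lt h]
      simp
    · have hxM : x = M := by omega
      subst hxM
      rw [Nat.choose_eq_zero_of_lt h]
      simp
  · -- M ≤ x - 1
    have h1 : x.choose M * M.factorial * (x - M).factorial = x.factorial :=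
      Nat.choose_mul_factorial_mul_factorial (by omega)
    have h2 : (x - 1).choose M * M.factorial * (x - 1 - M).factorial = (x - 1).factorial :=
      Nat.choose_mul_factorial_mul_factorial h
    have h3 : (x - M).factorial = (x - M) * (x - 1 - M).factorial := by
      have : x - M = (x - 1 - M) + 1 := by omega
      rw [this, Nat.factorial_succ]
    have h4 : x.factorial = x * (x - 1).factorial := by
      obtain ⟨y, rfl⟩ : ∃ y, x = y + 1 := ⟨x - 1, by omega⟩
      simp [Nat.factorial_succ]
    have hpos : 0 < M.factorial * (x - 1 - M).factorial :=
      Nat.mul_pos (Nat.factorial_pos _) (Nat.factorial_pos _)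
    apply Nat.eq_of_mul_eq_mul_right hpos
    calc x.choose M * (x - M) * (M.factorial * (x - 1 - M).factorial)
        = x.choose M * M.factorial * ((x - M) * (x - 1 - M).factorial) := by ring
      _ = x.choose M * M.factorial * (x - M).factorial := by rw [h3]
      _ = x.factorial := h1
      _ = x * (x - 1).factorial := h4
      _ = x * ((x - 1).choose M * M.factorial * (x - 1 - M).factorial) := by rw [h2]
      _ = x * (x - 1).choose M * (M.factorial * (x - 1 - M).factorial) := by ring

/-- descending choose bound. -/
lemma choose_sub_le (K M : ℕ) (hM : 0 < M) :
    ∀ a : ℕ, (K - a).choose M * K ^ a ≤ K.choose M * (K - M) ^ a := by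
  intro a
  induction a with
  | zero => simp
  | succ a ih =>
    have key : (K - (a + 1)).choose M * K ≤ (K - a).choose M * (K - M) := by
      set x := K - a with hxdef
      rcases Nat.eq_zero_or_pos x with hx0 | hx
      · have : K - (a + 1) = 0 := by omega
        rw [this, Nat.choose_eq_zero_of_lt hM]
        simp
      · have hx1 : K - (a + 1) = x - 1 := by omega
        have hxK : x ≤ K := by omega
        rw [hx1]
        have hmul : K * (x - M) ≤ (K - M) * x := by
          rcases Nat.lt_or_ge x M with h | h
          · have : x - M = 0 := by omega
            simp [this]
          · have hMK : M ≤ K := le_trans h hxK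
            zify [h, hMK]
            nlinarith [Nat.mul_le_mul_left M hxK]
        have step : (x - 1).choose M * K * x ≤ x.choose M * (K - M) * x := by
          calc (x - 1).choose M * K * x = K * (x * (x - 1).choose M) := by ring
            _ = K * (x.choose M * (x - M)) := by rw [choose_iden x M hx]
            _ = x.choose M * (K * (x - M)) := by ring
            _ ≤ x.choose M * ((K - M) * x) := Nat.mul_le_mul_left _ hmul
            _ = x.choose M * (K - M) * x := by ring
        exact Nat.le_of_mul_le_mul_right step hx
    calc (K - (a + 1)).choose M * K ^ (a + 1)
        = (K - (a + 1)).choose M * K * K ^ a := by ring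
      _ ≤ (K - a).choose M * (K - M) * K ^ a := Nat.mul_le_mul_right _ key
      _ = (K - a).choose M * K ^ a * (K - M) := by ring
      _ ≤ K.choose M * (K - M) ^ a * (K - M) := Nat.mul_le_mul_right _ ih
      _ = K.choose M * (K - M) ^ (a + 1) := by ring

/-- binomial single-term bound. -/
lemma choose_pow_le (a b : ℕ) : (a + b).choose a * (a ^ a * b ^ b) ≤ (a + b) ^ (a + b) := by
  have h := add_pow a b (a + b)
  simp only [Nat.cast_id] at h
  have hmem : a ∈ Finset.range (a + b + 1) := Finset.mem_range.mpr (by omega)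
  have hsingle := Finset.single_le_sum
    (f := fun m => a ^ m * b ^ (a + b - m) * ((a + b).choose m))
    (fun i _ => Nat.zero_le _) hmem
  rw [← h] at hsingle
  calc (a + b).choose a * (a ^ a * b ^ b)
      = a ^ a * b ^ (a + b - a) * ((a + b).choose a) := by
        rw [Nat.add_sub_cancel_left]; ring
    _ ≤ (a + b) ^ (a + b) := hsingle

/-- numeric exponential bound. -/
lemma exp_num : (823543 : ℝ) < 3125 * Real.exp (274 / 49) := by
  have hsplit : Real.exp ((274 : ℝ) / 49) = Real.exp 5 * Real.exp (29 / 49) := by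
    rw [← Real.exp_add]
    norm_num
  have h5 : (2.7182818283 : ℝ) ^ 5 < Real.exp 5 := by
    have h := Real.exp_one_gt_d9
    calc (2.7182818283 : ℝ) ^ 5 < Real.exp 1 ^ 5 := by
          apply pow_lt_pow_left₀ h (by norm_num)
          norm_num
      _ = Real.exp 5 := by
          rw [← Real.exp_nat_mul]
          norm_num
  have h29 : ((1 : ℝ) + 29 / 2450) ^ 50 ≤ Real.exp (29 / 49) := by
    have h := Real.add_one_le_exp ((29 : ℝ) / 2450)
    calc ((1 : ℝ) + 29 / 2450) ^ 50 ≤ Real.exp (29 / 2450) ^ 50 := by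
          apply pow_le_pow_left₀ (by norm_num) (by linarith)
      _ = Real.exp ((50 : ℕ) * (29 / 2450)) := (Real.exp_nat_mul _ 50).symm
      _ = Real.exp (29 / 49) := by norm_num
  have hnum : (823543 : ℝ) < 3125 * ((2.7182818283 : ℝ) ^ 5 * ((1 : ℝ) + 29 / 2450) ^ 50) := by
    norm_num
  have hpos : (0:ℝ) < (2.7182818283 : ℝ) ^ 5 := by positivity
  have hpos2 : (0:ℝ) < ((1 : ℝ) + 29 / 2450) ^ 50 := by positivity
  calc (823543 : ℝ) < 3125 * ((2.7182818283 : ℝ) ^ 5 * ((1 : ℝ) + 29 / 2450) ^ 50) := hnum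
    _ ≤ 3125 * (Real.exp 5 * Real.exp (29 / 49)) := by
        have := mul_le_mul (le_of_lt h5) h29 (le_of_lt hpos2) (le_of_lt (lt_trans hpos h5))
        nlinarith
    _ = 3125 * Real.exp (274 / 49) := by rw [hsplit]

/-- the key exponential inequality. -/
lemma key_exp (n K M : ℕ) (hn : 1 ≤ n) (hK : 0 < K) (hMK : M < K)
    (hratio : 274 * K ≤ 49 * (n * M)) :
    823543 * (K - M) ^ n < 3125 * K ^ n := by
  have hMKle : M ≤ K := hMK.le
  have h0 : ((K - M : ℕ) : ℝ) = (K : ℝ) - (M : ℝ) := Nat.cast_sub hMKle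
  have hKpos : (0 : ℝ) < (K : ℝ) := by exact_mod_cast hK
  have hMr : (M : ℝ) ≤ (K : ℝ) := by exact_mod_cast hMKle
  have hKMnn : (0 : ℝ) ≤ (K : ℝ) - (M : ℝ) := by linarith
  set r : ℝ := (M : ℝ) / (K : ℝ) with hr
  have h1 : (K : ℝ) - (M : ℝ) ≤ (K : ℝ) * Real.exp (-r) := by
    have h := Real.add_one_le_exp (-r)
    have h2 : (K : ℝ) * (-r + 1) = (K : ℝ) - (M : ℝ) := by
      rw [hr]; field_simp; ring
    nlinarith
  have h2 : ((K : ℝ) - (M : ℝ)) ^ n ≤ (K : ℝ) ^ n * Real.exp (-((n : ℝ) * r)) := by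
    calc ((K : ℝ) - (M : ℝ)) ^ n
        ≤ ((K : ℝ) * Real.exp (-r)) ^ n := pow_le_pow_left₀ hKMnn h1 n
      _ = (K : ℝ) ^ n * Real.exp (-r) ^ n := mul_pow _ _ n
      _ = (K : ℝ) ^ n * Real.exp (-((n : ℝ) * r)) := by
          rw [← Real.exp_nat_mul]
          ring_nf
  have h3 : (274 : ℝ) / 49 ≤ (n : ℝ) * r := by
    have hcast : (274 : ℝ) * (K : ℝ) ≤ 49 * ((n : ℝ) * (M : ℝ)) := by exact_mod_cast hratio
    rw [hr, mul_div_assoc']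
    rw [div_le_div_iff₀ (by norm_num) hKpos]
    linarith
  have h4 : Real.exp (-((n : ℝ) * r)) ≤ Real.exp (-(274 / 49)) := by
    apply Real.exp_le_exp.mpr
    linarith
  have h5 : (823543 : ℝ) * Real.exp (-(274 / 49)) < 3125 := by
    have hx := exp_num
    have hexp : Real.exp (-(274 / 49 : ℝ)) = (Real.exp (274 / 49))⁻¹ := Real.exp_neg _
    rw [hexp]
    rw [mul_inv_lt_iff₀ (Real.exp_pos _)]
    linarith
  have hKn : (0 : ℝ) < (K : ℝ) ^ n := by positivity
  have main : (823543 : ℝ) * ((K : ℝ) - (M : ℝ)) ^ n < 3125 * (K : ℝ) ^ n := by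
    calc (823543 : ℝ) * ((K : ℝ) - (M : ℝ)) ^ n
        ≤ 823543 * ((K : ℝ) ^ n * Real.exp (-((n : ℝ) * r))) := by nlinarith
      _ ≤ 823543 * ((K : ℝ) ^ n * Real.exp (-(274 / 49))) := by nlinarith [Real.exp_pos (-((n:ℝ)*r))]
      _ = (K : ℝ) ^ n * (823543 * Real.exp (-(274 / 49))) := by ring
      _ < (K : ℝ) ^ n * 3125 := by nlinarith
      _ = 3125 * (K : ℝ) ^ n := by ring
  have : ((823543 * (K - M) ^ n : ℕ) : ℝ) < ((3125 * K ^ n : ℕ) : ℝ) := by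
    push_cast [h0]
    convert main using 2
  exact_mod_cast this

/-- master counting inequality. -/
lemma master_count (n : ℕ) (hn : 6 ≤ n) :
    (7 * n).choose n * (6 * n).choose n *
      ((7 * n).choose 2 - n ^ 2).choose (137 * n - 1) <
    ((7 * n).choose 2).choose (137 * n - 1) := by
  set K := (7 * n).choose 2 with hKdef
  set M := 137 * n - 1 with hMdef
  have hn1 : 1 ≤ n := by omega
  have h2K : 2 * K = 7 * n * (7 * n - 1) := by
    rw [hKdef, Nat.choose_two_right]
    have heven : 2 ∣ 7 * n * (7 * n - 1) := by
      rcases Nat.even_or_odd n with h | h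
      · obtain ⟨k, hk⟩ := h
        exact ⟨7 * k * (7*n - 1), by subst hk; ring⟩
      · obtain ⟨k, hk⟩ := h
        refine ⟨7 * n * (7 * k + 3), ?_⟩
        subst hk
        have : 7 * (2 * k + 1) - 1 = 2 * (7 * k + 3) := by omega
        rw [this]
        ring
    omega
  have hMK : M < K := by
    have h1 : 294 * n ≤ 49 * n * n := by
      have : 294 ≤ 49 * n := by omega
      calc 294 * n ≤ (49 * n) * n := Nat.mul_le_mul_right n this
        _ = 49 * n * n := by ring
    have h2 : 2 * K = 49 * n * n - 7 * n := by
      obtain ⟨m, hm⟩ : ∃ m, 7 * n = m + 1 := ⟨7 * n - 1, by omega⟩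
      have e1 : 49 * n * n = (7 * n) * (7 * n) := by ring
      rw [h2K, e1, hm]
      simp only [Nat.add_sub_cancel]
      have e2 : (m + 1) * (m + 1) = (m + 1) * m + (m + 1) := by ring
      omega
    omega
  have hKpos : 0 < K := by omega
  have hMpos : 0 < M := by omega
  have hratio : 274 * K ≤ 49 * (n * M) := by
    have e1 : 2 * (274 * K) = 274 * (7 * n * (7 * n - 1)) := by omega
    have e2 : 2 * (49 * (n * M)) = 98 * n * (137 * n - 1) := by rw [hMdef]; ring
    have h3 : 274 * (7 * n * (7 * n - 1)) ≤ 98 * n * (137 * n - 1) := by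
      have ha : 7 * n - 1 + 1 = 7 * n := by omega
      have hb : 137 * n - 1 + 1 = 137 * n := by omega
      nlinarith [ha, hb]
    omega
  -- part B : strict power inequality
  have hB := key_exp n K M hn1 hKpos hMK hratio
  have hB2 : (823543 * (K - M) ^ n) ^ n < (3125 * K ^ n) ^ n :=
    Nat.pow_lt_pow_left hB (by omega)
  have hB3 : 823543 ^ n * (K - M) ^ (n * n) < 3125 ^ n * K ^ (n * n) := by
    calc 823543 ^ n * (K - M) ^ (n * n)
        = (823543 * (K - M) ^ n) ^ n := by rw [mul_pow, ← pow_mul]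
      _ < (3125 * K ^ n) ^ n := hB2
      _ = 3125 ^ n * K ^ (n * n) := by rw [mul_pow, ← pow_mul]
  -- part A : binomials vs powers
  set A := (7 * n).choose n * (6 * n).choose n with hAdef
  have step1 : (7 * n).choose n * (n ^ n * (6 * n) ^ (6 * n)) ≤ (7 * n) ^ (7 * n) := by
    have h := choose_pow_le n (6 * n)
    have e : n + 6 * n = 7 * n := by ring
    rwa [e] at h
  have step2 : (6 * n).choose n * (n ^ n * (5 * n) ^ (5 * n)) ≤ (6 * n) ^ (6 * n) := by
    have h := choose_pow_le n (5 * n)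
    have e : n + 5 * n = 6 * n := by ring
    rwa [e] at h
  have hcomb : A * (n ^ n * n ^ n * (5 * n) ^ (5 * n)) * (6 * n) ^ (6 * n)
      ≤ (7 * n) ^ (7 * n) * (6 * n) ^ (6 * n) := by
    calc A * (n ^ n * n ^ n * (5 * n) ^ (5 * n)) * (6 * n) ^ (6 * n)
        = ((7 * n).choose n * (n ^ n * (6 * n) ^ (6 * n))) *
          ((6 * n).choose n * (n ^ n * (5 * n) ^ (5 * n))) := by rw [hAdef]; ring
      _ ≤ (7 * n) ^ (7 * n) * (6 * n) ^ (6 * n) := Nat.mul_le_mul step1 step2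
  have hpos6 : 0 < (6 * n) ^ (6 * n) := by positivity
  have hA1 : A * (n ^ n * n ^ n * (5 * n) ^ (5 * n)) ≤ (7 * n) ^ (7 * n) :=
    Nat.le_of_mul_le_mul_right (by
      calc A * (n ^ n * n ^ n * (5 * n) ^ (5 * n)) * (6 * n) ^ (6 * n)
          ≤ (7 * n) ^ (7 * n) * (6 * n) ^ (6 * n) := hcomb) hpos6
  have hA2 : A * 3125 ^ n ≤ 823543 ^ n := by
    have e1 : n ^ n * n ^ n * (5 * n) ^ (5 * n) = 3125 ^ n * n ^ (7 * n) := by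
      have h5 : (5 * n) ^ (5 * n) = 3125 ^ n * n ^ (5 * n) := by
        rw [mul_pow, pow_mul]; norm_num
      have h7 : n ^ n * n ^ n * n ^ (5 * n) = n ^ (7 * n) := by
        rw [← pow_add, ← pow_add]; congr 1; ring
      calc n ^ n * n ^ n * (5 * n) ^ (5 * n)
          = 3125 ^ n * (n ^ n * n ^ n * n ^ (5 * n)) := by rw [h5]; ring
        _ = 3125 ^ n * n ^ (7 * n) := by rw [h7]
    have e2 : (7 * n) ^ (7 * n) = 823543 ^ n * n ^ (7 * n) := by
      rw [mul_pow, pow_mul]; norm_num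
    rw [e1] at hA1
    rw [e2] at hA1
    have hposn : 0 < n ^ (7 * n) := by positivity
    exact Nat.le_of_mul_le_mul_right (by
      calc A * 3125 ^ n * n ^ (7 * n) = A * (3125 ^ n * n ^ (7 * n)) := by ring
        _ ≤ 823543 ^ n * n ^ (7 * n) := hA1) hposn
  -- combine A and B : A * (K-M)^(n*n) < K^(n*n)
  have hC : A * (K - M) ^ (n * n) < K ^ (n * n) := by
    have h1 : A * (K - M) ^ (n * n) * 3125 ^ n ≤ 823543 ^ n * (K - M) ^ (n * n) := by
      calc A * (K - M) ^ (n * n) * 3125 ^ n = (A * 3125 ^ n) * (K - M) ^ (n * n) := by ring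
        _ ≤ 823543 ^ n * (K - M) ^ (n * n) := Nat.mul_le_mul_right _ hA2
    have h2 : A * (K - M) ^ (n * n) * 3125 ^ n < K ^ (n * n) * 3125 ^ n := by
      calc A * (K - M) ^ (n * n) * 3125 ^ n ≤ 823543 ^ n * (K - M) ^ (n * n) := h1
        _ < 3125 ^ n * K ^ (n * n) := hB3
        _ = K ^ (n * n) * 3125 ^ n := by ring
    exact Nat.lt_of_mul_lt_mul_right h2
  -- part C : descending choose
  have hD := choose_sub_le K M hMpos (n ^ 2)
  have hchoosepos : 0 < K.choose M := Nat.choose_pos hMK.le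
  have hsq : n ^ 2 = n * n := sq n
  have final : A * (K - n ^ 2).choose M * K ^ (n ^ 2) < K.choose M * K ^ (n ^ 2) := by
    calc A * (K - n ^ 2).choose M * K ^ (n ^ 2)
        = A * ((K - n ^ 2).choose M * K ^ (n ^ 2)) := by ring
      _ ≤ A * (K.choose M * (K - M) ^ (n ^ 2)) := Nat.mul_le_mul_left _ hD
      _ = K.choose M * (A * (K - M) ^ (n * n)) := by rw [hsq]; ring
      _ < K.choose M * K ^ (n * n) := by
          exact mul_lt_mul_of_pos_left hC hchoosepos
      _ = K.choose M * K ^ (n ^ 2) := by rw [hsq]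
  have hKpow : 0 < K ^ (n ^ 2) := by positivity
  exact Nat.lt_of_mul_lt_mul_right final

lemma exists_good (n : ℕ) (hn : 6 ≤ n) :
    ∃ G : SimpleGraph (Fin (7 * n)),
      G.edgeSet.ncard < 137 * n ∧
      ∀ A B : Finset (Fin (7 * n)), Disjoint A B → n ≤ A.card → n ≤ B.card →
        ∃ a ∈ A, ∃ b ∈ B, G.Adj a b := by
  classical
  set M := 137 * n - 1 with hMdef
  set E := (⊤ : SimpleGraph (Fin (7 * n))).edgeFinset with hEdef
  have hcardV : Fintype.card (Fin (7 * n)) = 7 * n := by simp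
  have hK : E.card = (7 * n).choose 2 := by
    rw [hEdef, SimpleGraph.card_edgeFinset_top_eq_card_choose_two, hcardV]
  set K := E.card with hKdef
  set Ω := E.powersetCard M with hΩdef
  have hΩcard : Ω.card = K.choose M := by
    rw [hΩdef, Finset.card_powersetCard]
  set P : Finset (Sym2 (Fin (7 * n))) → Prop := fun e =>
    ∀ A B : Finset (Fin (7 * n)), Disjoint A B → A.card = n → B.card = n →
      ∃ a ∈ A, ∃ b ∈ B, s(a, b) ∈ e with hPdef
  set Bad := Ω.filter (fun e => ¬ P e) with hBaddef
  -- each pair's bad set is small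
  have hinner : ∀ A B : Finset (Fin (7 * n)), Disjoint A B → A.card = n → B.card = n →
      (Ω.filter (fun e => ∀ a ∈ A, ∀ b ∈ B, s(a, b) ∉ e)).card ≤ (K - n ^ 2).choose M := by
    intro A B hAB hA hB
    set cross := (A ×ˢ B).image (fun p => s(p.1, p.2)) with hcrossdef
    have hcrossE : cross ⊆ E := by
      intro x hx
      obtain ⟨⟨a, b⟩, hab, rfl⟩ := Finset.mem_image.mp hx
      obtain ⟨ha, hb⟩ := Finset.mem_product.mp hab
      rw [hEdef, SimpleGraph.mem_edgeFinset]
      have hne : a ≠ b := fun h => (Finset.disjoint_left.mp hAB) ha (h ▸ hb)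
      exact hne
    have hcrosscard : cross.card = n ^ 2 := by
      rw [hcrossdef, Finset.card_image_of_injOn, Finset.card_product, hA, hB, sq]
      rintro ⟨a, b⟩ hab ⟨c, d⟩ hcd h
      obtain ⟨ha, hb⟩ := Finset.mem_product.mp hab
      obtain ⟨hc, hd⟩ := Finset.mem_product.mp hcd
      simp only [Sym2.eq_iff] at h
      rcases h with ⟨rfl, rfl⟩ | ⟨rfl, rfl⟩
      · rfl
      · exact absurd hc (fun hcA => (Finset.disjoint_left.mp hAB) hcA hb)
    have hsub : Ω.filter (fun e => ∀ a ∈ A, ∀ b ∈ B, s(a, b) ∉ e) ⊆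
        (E \ cross).powersetCard M := by
      intro e he
      obtain ⟨heΩ, hprop⟩ := Finset.mem_filter.mp he
      obtain ⟨heE, hecard⟩ := Finset.mem_powersetCard.mp heΩ
      refine Finset.mem_powersetCard.mpr ⟨?_, hecard⟩
      intro x hx
      refine Finset.mem_sdiff.mpr ⟨heE hx, ?_⟩
      intro hxc
      obtain ⟨⟨a, b⟩, hab, rfl⟩ := Finset.mem_image.mp hxc
      obtain ⟨ha, hb⟩ := Finset.mem_product.mp hab
      exact hprop a ha b hb hx
    calc (Ω.filter (fun e => ∀ a ∈ A, ∀ b ∈ B, s(a, b) ∉ e)).card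
        ≤ ((E \ cross).powersetCard M).card := Finset.card_le_card hsub
      _ = (E \ cross).card.choose M := Finset.card_powersetCard _ _
      _ = (K - n ^ 2).choose M := by
          rw [Finset.card_sdiff_of_subset hcrossE, hcrosscard]
  -- cover bad by union over pairs
  have hcover : Bad ⊆ (Finset.univ.powersetCard n).biUnion (fun A =>
      ((Finset.univ \ A).powersetCard n).biUnion (fun B =>
        Ω.filter (fun e => ∀ a ∈ A, ∀ b ∈ B, s(a, b) ∉ e))) := by
    intro e he
    obtain ⟨heΩ, hnP⟩ := Finset.mem_filter.mp he
    replace hnP : ¬ (∀ A B : Finset (Fin (7 * n)), Disjoint A B → A.card = n → B.card = n →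
        ∃ a ∈ A, ∃ b ∈ B, s(a, b) ∈ e) := hnP
    push_neg at hnP
    obtain ⟨A, B, hAB, hA, hB, hno⟩ := hnP
    refine Finset.mem_biUnion.mpr ⟨A, ?_, Finset.mem_biUnion.mpr ⟨B, ?_, ?_⟩⟩
    · exact Finset.mem_powersetCard.mpr ⟨Finset.subset_univ _, hA⟩
    · refine Finset.mem_powersetCard.mpr ⟨?_, hB⟩
      intro b hb
      exact Finset.mem_sdiff.mpr ⟨Finset.mem_univ _,
        fun hbA => (Finset.disjoint_left.mp hAB) hbA hb⟩
    · exact Finset.mem_filter.mpr ⟨heΩ, hno⟩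
  -- card bound
  have hBadcard : Bad.card ≤ (7 * n).choose n * ((6 * n).choose n * (K - n ^ 2).choose M) := by
    calc Bad.card ≤ ∑ A ∈ Finset.univ.powersetCard n,
          (((Finset.univ \ A).powersetCard n).biUnion (fun B =>
            Ω.filter (fun e => ∀ a ∈ A, ∀ b ∈ B, s(a, b) ∉ e))).card :=
        le_trans (Finset.card_le_card hcover) (Finset.card_biUnion_le)
      _ ≤ ∑ A ∈ Finset.univ.powersetCard n, ((6 * n).choose n * (K - n ^ 2).choose M) := by
          apply Finset.sum_le_sum
          intro A hA
          obtain ⟨hAsub, hAcard⟩ := Finset.mem_powersetCard.mp hA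
          calc (((Finset.univ \ A).powersetCard n).biUnion (fun B =>
                Ω.filter (fun e => ∀ a ∈ A, ∀ b ∈ B, s(a, b) ∉ e))).card
              ≤ ∑ B ∈ (Finset.univ \ A).powersetCard n,
                  (Ω.filter (fun e => ∀ a ∈ A, ∀ b ∈ B, s(a, b) ∉ e)).card :=
                Finset.card_biUnion_le
            _ ≤ ∑ _B ∈ (Finset.univ \ A).powersetCard n, (K - n ^ 2).choose M := by
                apply Finset.sum_le_sum
                intro B hB
                obtain ⟨hBsub, hBcard⟩ := Finset.mem_powersetCard.mp hB
                apply hinner A B ?_ hAcard hBcard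
                rw [Finset.disjoint_right]
                intro b hbB
                exact (Finset.mem_sdiff.mp (hBsub hbB)).2
            _ = ((Finset.univ \ A).powersetCard n).card * (K - n ^ 2).choose M := by
                rw [Finset.sum_const, smul_eq_mul]
            _ = (6 * n).choose n * (K - n ^ 2).choose M := by
                rw [Finset.card_powersetCard, Finset.card_sdiff_of_subset (Finset.subset_univ _),
                  Finset.card_univ, hcardV, hAcard]
                congr 2
                omega
      _ = (7 * n).choose n * ((6 * n).choose n * (K - n ^ 2).choose M) := by
          rw [Finset.sum_const, smul_eq_mul, Finset.card_powersetCard,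
            Finset.card_univ, hcardV]
  have hlt : Bad.card < Ω.card := by
    rw [hΩcard]
    calc Bad.card ≤ (7 * n).choose n * ((6 * n).choose n * (K - n ^ 2).choose M) := hBadcard
      _ < K.choose M := by
          have := master_count n hn
          rw [← hK] at this
          calc (7 * n).choose n * ((6 * n).choose n * (K - n ^ 2).choose M)
              = (7 * n).choose n * (6 * n).choose n * (K - n ^ 2).choose M := by ring
            _ < K.choose M := this
  -- extract a good edge set
  have hnotsub : ¬ (Ω ⊆ Bad) := fun h => absurd (Finset.card_le_card h) (not_le.mpr hlt)
  obtain ⟨e, heΩ, heBad⟩ := Finset.not_subset.mp hnotsub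
  obtain ⟨heE, hecard⟩ := Finset.mem_powersetCard.mp heΩ
  have hPe : P e := by
    by_contra hc
    exact heBad (Finset.mem_filter.mpr ⟨heΩ, hc⟩)
  refine ⟨SimpleGraph.fromEdgeSet ↑e, ?_, ?_⟩
  · have hed : (SimpleGraph.fromEdgeSet (↑e : Set (Sym2 (Fin (7 * n))))).edgeSet = ↑e := by
      rw [SimpleGraph.edgeSet_fromEdgeSet]
      refine Set.Subset.antisymm Set.diff_subset (fun x hx => ⟨hx, ?_⟩)
      intro hd
      have hxE := heE (Finset.mem_coe.mp hx)
      rw [hEdef, SimpleGraph.mem_edgeFinset] at hxE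
      exact (SimpleGraph.not_isDiag_of_mem_edgeSet _ hxE) hd
    rw [hed, Set.ncard_coe_finset, hecard]
    omega
  · intro A B hAB hA hB
    obtain ⟨A', hA'sub, hA'card⟩ := Finset.exists_subset_card_eq hA
    obtain ⟨B', hB'sub, hB'card⟩ := Finset.exists_subset_card_eq hB
    have hdisj : Disjoint A' B' :=
      Finset.disjoint_of_subset_left hA'sub (Finset.disjoint_of_subset_right hB'sub hAB)
    obtain ⟨a, ha, b, hb, hab⟩ := hPe A' B' hdisj hA'card hB'card
    refine ⟨a, hA'sub ha, b, hB'sub hb, ?_⟩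
    rw [SimpleGraph.fromEdgeSet_adj]
    exact ⟨by exact_mod_cast hab, fun h => (Finset.disjoint_left.mp hdisj) ha (h ▸ hb)⟩

/-- Theorem 1.1: for all sufficiently large `n`, `r̂(P_n) < 137 n`, i.e. there is
a graph with fewer than `137 n` edges every 2-colouring of which contains a
monochromatic path on `n` vertices. -/
theorem stmt15 : ∀ᶠ n : ℕ in Filter.atTop,
    ∃ (N : ℕ) (G : SimpleGraph (Fin N)),
      G.edgeSet.ncard < 137 * n ∧
      ∀ blue ≤ G,
        (∃ (u v : Fin N) (p : blue.Walk u v), p.IsPath ∧ p.support.length = n) ∨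
        (∃ (u v : Fin N) (p : (G \ blue).Walk u v), p.IsPath ∧ p.support.length = n) := by
  rw [Filter.eventually_atTop]
  refine ⟨6, fun n hn => ?_⟩
  obtain ⟨G, hG, hQ⟩ := exists_good n hn
  exact ⟨7 * n, G, hG, arrows n (by omega) G hQ⟩
end
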